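/- Let b_0, ..., b_N > 0, Δ > 0, λ > 0, and define L(b_0,...,b_N) = Δ Σ_{l=0}^{N-1} exp(-Σ_{j=0}^{l} b_j) - λ Σ_{l=0}^{N} b_l exp(-Σ_{j=0}^{l} b_j). If all partial derivatives ∂L/∂b_m vanish, then b_N = 1 and b_m = 1 - exp(-b_{m+1}) + Δ/λ for 0 ≤ m ≤ N-1. -/

import Mathlib

open Finset

/-- Pure sum computation: difference of truncated indicator sums, first kind. -/
lemma dsum1 (N m : ℕ) (hm : m < N) (E : ℕ → ℝ) :
    (∑ l ∈ Finset.range N, if m ≤ l then -(E l) else 0)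
      - (∑ l ∈ Finset.range N, if m + 1 ≤ l then -(E l) else 0) = -(E m) := by
  rw [← Finset.sum_sub_distrib]
  have h : ∀ l ∈ Finset.range N,
      ((if m ≤ l then -(E l) else 0) - (if m + 1 ≤ l then -(E l) else 0))
        = if l = m then -(E m) else 0 := by
    intro l _
    rcases lt_trichotomy l m with h | h | h
    · rw [if_neg (by omega), if_neg (by omega), if_neg (by omega)]; ring
    · subst h; rw [if_pos le_rfl, if_neg (by omega), if_pos rfl]; ring
    · rw [if_pos (by omega), if_pos (by omega), if_neg (by omega)]; ring
  rw [Finset.sum_congr rfl h, Finset.sum_ite_eq' (Finset.range N) m,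
    if_pos (Finset.mem_range.mpr hm)]

/-- Pure sum computation: difference of the second kind. -/
lemma dsum2 (N m : ℕ) (hm : m < N) (c E : ℕ → ℝ) :
    (∑ l ∈ Finset.range (N + 1),
        ((if l = m then (1 : ℝ) else 0) * E l + c l * (if m ≤ l then -(E l) else 0)))
      - (∑ l ∈ Finset.range (N + 1),
        ((if l = m + 1 then (1 : ℝ) else 0) * E l + c l * (if m + 1 ≤ l then -(E l) else 0)))
      = E m - c m * E m - E (m + 1) := by
  rw [← Finset.sum_sub_distrib]
  have h : ∀ l ∈ Finset.range (N + 1),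
      (((if l = m then (1 : ℝ) else 0) * E l + c l * (if m ≤ l then -(E l) else 0))
        - ((if l = m + 1 then (1 : ℝ) else 0) * E l + c l * (if m + 1 ≤ l then -(E l) else 0)))
      = (if l = m then E m - c m * E m else 0) + (if l = m + 1 then -(E (m + 1)) else 0) := by
    intro l _
    rcases lt_trichotomy l m with h | h | h
    · rw [if_neg (by omega), if_neg (by omega), if_neg (by omega), if_neg (by omega),
        if_neg (by omega), if_neg (by omega)]; ring
    · subst h
      rw [if_pos rfl, if_pos le_rfl, if_neg (by omega), if_neg (by omega), if_pos rfl,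
        if_neg (by omega)]; ring
    · rcases eq_or_lt_of_le (Nat.succ_le_of_lt h) with h2 | h2
      · subst h2
        rw [if_neg (by omega), if_pos (by omega), if_pos rfl, if_pos le_rfl,
          if_neg (by omega), if_pos rfl]; ring
      · rw [if_neg (by omega), if_pos (by omega), if_neg (by omega), if_pos (by omega),
          if_neg (by omega), if_neg (by omega)]; ring
  rw [Finset.sum_congr rfl h, Finset.sum_add_distrib,
    Finset.sum_ite_eq' (Finset.range (N + 1)) m,
    Finset.sum_ite_eq' (Finset.range (N + 1)) (m + 1),
    if_pos (Finset.mem_range.mpr (by omega)), if_pos (Finset.mem_range.mpr (by omega))]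
  ring

lemma sumN1 (N : ℕ) (E : ℕ → ℝ) :
    (∑ l ∈ Finset.range N, if N ≤ l then -(E l) else 0) = 0 :=
  Finset.sum_eq_zero fun l hl => if_neg (by have := Finset.mem_range.mp hl; omega)

lemma sumN2 (N : ℕ) (c E : ℕ → ℝ) :
    (∑ l ∈ Finset.range (N + 1),
        ((if l = N then (1 : ℝ) else 0) * E l + c l * (if N ≤ l then -(E l) else 0)))
      = E N - c N * E N := by
  rw [Finset.sum_eq_single_of_mem N (Finset.self_mem_range_succ N)]
  · rw [if_pos rfl, if_pos le_rfl]; ring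
  · intro l hl hne
    have hlt : l < N := by have := Finset.mem_range.mp hl; omega
    rw [if_neg hne, if_neg (by omega)]; ring

/-- The stationarity equation obtained from the vanishing partial derivative. -/
lemma aux_deriv (N m : ℕ) (Δ lam : ℝ) (b : ℕ → ℝ) (L : (ℕ → ℝ) → ℝ)
    (hL : ∀ c : ℕ → ℝ, L c = Δ * ∑ l ∈ Finset.range N,
          Real.exp (-(∑ j ∈ Finset.range (l + 1), c j))
        - lam * ∑ l ∈ Finset.range (N + 1),
          c l * Real.exp (-(∑ j ∈ Finset.range (l + 1), c j)))
    (h0 : deriv (fun x : ℝ => L (Function.update b m x)) (b m) = 0) :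
    Δ * (∑ l ∈ Finset.range N,
        if m ≤ l then -(Real.exp (-(∑ j ∈ Finset.range (l + 1), b j))) else 0)
      - lam * (∑ l ∈ Finset.range (N + 1),
        ((if l = m then (1 : ℝ) else 0) * Real.exp (-(∑ j ∈ Finset.range (l + 1), b j))
          + b l * (if m ≤ l then -(Real.exp (-(∑ j ∈ Finset.range (l + 1), b j))) else 0)))
      = 0 := by
  have hupd : ∀ (l : ℕ) (x : ℝ), (∑ j ∈ Finset.range (l + 1), Function.update b m x j)
      = (∑ j ∈ Finset.range (l + 1), b j) + (if m ≤ l then x - b m else 0) := by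
    intro l x
    by_cases h : m ≤ l
    · have hmem : m ∈ Finset.range (l + 1) := Finset.mem_range.mpr (by omega)
      rw [if_pos h, Finset.sum_update_of_mem hmem, Finset.sdiff_singleton_eq_erase]
      have h2 := Finset.sum_erase_add (Finset.range (l + 1)) b hmem
      linarith
    · rw [if_neg h, add_zero]
      refine Finset.sum_congr rfl fun j hj => ?_
      have hj' : j ≠ m := by have := Finset.mem_range.mp hj; omega
      exact Function.update_of_ne hj' x b
  have hf : ∀ l : ℕ, HasDerivAt
      (fun x : ℝ => Real.exp (-((∑ j ∈ Finset.range (l + 1), b j)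
        + (if m ≤ l then x - b m else 0))))
      (if m ≤ l then -(Real.exp (-(∑ j ∈ Finset.range (l + 1), b j))) else 0) (b m) := by
    intro l
    by_cases h : m ≤ l
    · simp only [if_pos h]
      have h1 : HasDerivAt
          (fun x : ℝ => -((∑ j ∈ Finset.range (l + 1), b j) + (x - b m))) (-1) (b m) := by
        exact ((((hasDerivAt_id (b m)).sub_const (b m)).const_add
          (∑ j ∈ Finset.range (l + 1), b j)).neg)
      have h2 := h1.exp
      simpa using h2
    · simp only [if_neg h]
      exact hasDerivAt_const (b m) _
  have hg : ∀ l : ℕ, HasDerivAt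
      (fun x : ℝ => (if l = m then x else b l) * Real.exp (-((∑ j ∈ Finset.range (l + 1), b j)
        + (if m ≤ l then x - b m else 0))))
      ((if l = m then (1 : ℝ) else 0) * Real.exp (-(∑ j ∈ Finset.range (l + 1), b j))
        + b l * (if m ≤ l then -(Real.exp (-(∑ j ∈ Finset.range (l + 1), b j))) else 0))
      (b m) := by
    intro l
    have hu : HasDerivAt (fun x : ℝ => if l = m then x else b l)
        (if l = m then (1 : ℝ) else 0) (b m) := by
      by_cases h : l = m
      · simp only [if_pos h]; exact hasDerivAt_id (b m)
      · simp only [if_neg h]; exact hasDerivAt_const (b m) (b l)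
    have h2 := hu.fun_mul (hf l)
    refine h2.congr_deriv ?_
    by_cases h : l = m
    · subst h; simp
    · simp [h]
  have hsum1 : HasDerivAt
      (fun x : ℝ => ∑ l ∈ Finset.range N, Real.exp (-((∑ j ∈ Finset.range (l + 1), b j)
        + (if m ≤ l then x - b m else 0))))
      (∑ l ∈ Finset.range N,
        if m ≤ l then -(Real.exp (-(∑ j ∈ Finset.range (l + 1), b j))) else 0) (b m) :=
    HasDerivAt.fun_sum fun l _ => hf l
  have hsum2 : HasDerivAt
      (fun x : ℝ => ∑ l ∈ Finset.range (N + 1),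
        (if l = m then x else b l) * Real.exp (-((∑ j ∈ Finset.range (l + 1), b j)
          + (if m ≤ l then x - b m else 0))))
      (∑ l ∈ Finset.range (N + 1),
        ((if l = m then (1 : ℝ) else 0) * Real.exp (-(∑ j ∈ Finset.range (l + 1), b j))
          + b l * (if m ≤ l then -(Real.exp (-(∑ j ∈ Finset.range (l + 1), b j))) else 0)))
      (b m) :=
    HasDerivAt.fun_sum fun l _ => hg l
  have hD := (hsum1.const_mul Δ).fun_sub (hsum2.const_mul lam)
  have hEq : (fun x : ℝ => L (Function.update b m x))
      = fun x : ℝ => Δ * ∑ l ∈ Finset.range N,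
          Real.exp (-((∑ j ∈ Finset.range (l + 1), b j) + (if m ≤ l then x - b m else 0)))
        - lam * ∑ l ∈ Finset.range (N + 1),
          (if l = m then x else b l) * Real.exp (-((∑ j ∈ Finset.range (l + 1), b j)
            + (if m ≤ l then x - b m else 0))) := by
    funext x
    rw [hL]
    simp only [hupd]
    simp only [Function.update_apply]
  rw [hEq, hD.deriv] at h0
  exact h0

theorem stmt17 (N : ℕ) (Δ lam : ℝ) (hΔ : 0 < Δ) (hlam : 0 < lam)
    (b : ℕ → ℝ) (hb : ∀ j, 0 < b j)
    (L : (ℕ → ℝ) → ℝ)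
    (hL : ∀ c : ℕ → ℝ, L c = Δ * ∑ l ∈ Finset.range N,
          Real.exp (-(∑ j ∈ Finset.range (l + 1), c j))
        - lam * ∑ l ∈ Finset.range (N + 1),
          c l * Real.exp (-(∑ j ∈ Finset.range (l + 1), c j)))
    (hstat : ∀ m ≤ N, deriv (fun x : ℝ => L (Function.update b m x)) (b m) = 0) :
    b N = 1 ∧ ∀ m < N, b m = 1 - Real.exp (-b (m + 1)) + Δ / lam := by
  have key : ∀ m ≤ N,
      Δ * (∑ l ∈ Finset.range N,
          if m ≤ l then -(Real.exp (-(∑ j ∈ Finset.range (l + 1), b j))) else 0)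
        - lam * (∑ l ∈ Finset.range (N + 1),
          ((if l = m then (1 : ℝ) else 0) * Real.exp (-(∑ j ∈ Finset.range (l + 1), b j))
            + b l * (if m ≤ l then -(Real.exp (-(∑ j ∈ Finset.range (l + 1), b j))) else 0)))
        = 0 := fun m hm => aux_deriv N m Δ lam b L hL (hstat m hm)
  constructor
  · -- b N = 1
    have h := key N le_rfl
    have h1 : (∑ l ∈ Finset.range N,
        if N ≤ l then -(Real.exp (-(∑ j ∈ Finset.range (l + 1), b j))) else 0) = 0 := by
      simpa using sumN1 N (fun l => Real.exp (-(∑ j ∈ Finset.range (l + 1), b j)))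
    have h2 : (∑ l ∈ Finset.range (N + 1),
        ((if l = N then (1 : ℝ) else 0) * Real.exp (-(∑ j ∈ Finset.range (l + 1), b j))
          + b l * (if N ≤ l then -(Real.exp (-(∑ j ∈ Finset.range (l + 1), b j))) else 0)))
        = Real.exp (-(∑ j ∈ Finset.range (N + 1), b j))
          - b N * Real.exp (-(∑ j ∈ Finset.range (N + 1), b j)) := by
      simpa using sumN2 N b (fun l => Real.exp (-(∑ j ∈ Finset.range (l + 1), b j)))
    rw [h1, h2] at h
    have hE : 0 < Real.exp (-(∑ j ∈ Finset.range (N + 1), b j)) := Real.exp_pos _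
    have h3 : lam * (Real.exp (-(∑ j ∈ Finset.range (N + 1), b j))
        - b N * Real.exp (-(∑ j ∈ Finset.range (N + 1), b j))) = 0 := by linarith
    have h4 := (mul_eq_zero.mp h3).resolve_left hlam.ne'
    have h5 : (1 - b N) * Real.exp (-(∑ j ∈ Finset.range (N + 1), b j)) = 0 := by
      linear_combination h4
    have h6 := (mul_eq_zero.mp h5).resolve_right hE.ne'
    linarith
  · intro m hmN
    have h1 := key m (le_of_lt hmN)
    have h2 := key (m + 1) hmN
    have d1 : (∑ l ∈ Finset.range N,
          if m ≤ l then -(Real.exp (-(∑ j ∈ Finset.range (l + 1), b j))) else 0)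
        - (∑ l ∈ Finset.range N,
          if m + 1 ≤ l then -(Real.exp (-(∑ j ∈ Finset.range (l + 1), b j))) else 0)
        = -(Real.exp (-(∑ j ∈ Finset.range (m + 1), b j))) := by
      simpa using dsum1 N m hmN (fun l => Real.exp (-(∑ j ∈ Finset.range (l + 1), b j)))
    have d2 : (∑ l ∈ Finset.range (N + 1),
          ((if l = m then (1 : ℝ) else 0) * Real.exp (-(∑ j ∈ Finset.range (l + 1), b j))
            + b l * (if m ≤ l then -(Real.exp (-(∑ j ∈ Finset.range (l + 1), b j))) else 0)))
        - (∑ l ∈ Finset.range (N + 1),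
          ((if l = m + 1 then (1 : ℝ) else 0) * Real.exp (-(∑ j ∈ Finset.range (l + 1), b j))
            + b l * (if m + 1 ≤ l then -(Real.exp (-(∑ j ∈ Finset.range (l + 1), b j))) else 0)))
        = Real.exp (-(∑ j ∈ Finset.range (m + 1), b j))
          - b m * Real.exp (-(∑ j ∈ Finset.range (m + 1), b j))
          - Real.exp (-(∑ j ∈ Finset.range (m + 2), b j)) := by
      simpa using dsum2 N m hmN b (fun l => Real.exp (-(∑ j ∈ Finset.range (l + 1), b j)))
    have h3 : Δ * (-(Real.exp (-(∑ j ∈ Finset.range (m + 1), b j))))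
        - lam * (Real.exp (-(∑ j ∈ Finset.range (m + 1), b j))
          - b m * Real.exp (-(∑ j ∈ Finset.range (m + 1), b j))
          - Real.exp (-(∑ j ∈ Finset.range (m + 2), b j))) = 0 := by
      linear_combination h1 - h2 - Δ * d1 + lam * d2
    have hEsucc : Real.exp (-(∑ j ∈ Finset.range (m + 2), b j))
        = Real.exp (-(∑ j ∈ Finset.range (m + 1), b j)) * Real.exp (-(b (m + 1))) := by
      rw [Finset.sum_range_succ, ← Real.exp_add]
      congr 1
      ring
    rw [hEsucc] at h3
    have hEm : 0 < Real.exp (-(∑ j ∈ Finset.range (m + 1), b j)) := Real.exp_pos _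
    have h4 : Real.exp (-(∑ j ∈ Finset.range (m + 1), b j))
        * (-Δ - lam * (1 - b m - Real.exp (-(b (m + 1))))) = 0 := by
      linear_combination h3
    have h5 := (mul_eq_zero.mp h4).resolve_left hEm.ne'
    have hgoal : lam * b m = lam * (1 - Real.exp (-(b (m + 1)))) + Δ := by
      linear_combination h5
    rw [show -b (m + 1) = -(b (m + 1)) by ring]
    field_simp
    linear_combination hgoal
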